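/- For every odd integer m ≥ 1, the polynomial He_m(x)³ has Hermite rank 1; precisely, ∫ He_m(x)³ · x dγ(x) > 0. -/

import Mathlib

open Polynomial MeasureTheory ProbabilityTheory

/-- The `n`-th probabilists' Hermite polynomial, with real coefficients. -/
noncomputable def hermiteR (n : ℕ) : Polynomial ℝ :=
  (Polynomial.hermite n).map (Int.castRingHom ℝ)

/-- The standard Gaussian measure `N(0,1)` on `ℝ`. -/
noncomputable def stdGaussian : Measure ℝ := gaussianReal 0 1

/-- `F` has Hermite rank `m`: `m ≥ 1` is the smallest integer `k ≥ 1` such that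
`∫ F(x) He_k(x) dγ(x) ≠ 0`, where `γ` is the standard Gaussian measure. -/
def HasHermiteRank (F : Polynomial ℝ) (m : ℕ) : Prop :=
  1 ≤ m ∧ (∫ x, F.eval x * (hermiteR m).eval x ∂stdGaussian) ≠ 0 ∧
    ∀ k, 1 ≤ k → k < m → (∫ x, F.eval x * (hermiteR k).eval x ∂stdGaussian) = 0

open Real Filter Nat

lemma hermiteR_zero : hermiteR 0 = 1 := by simp [hermiteR]

lemma hermiteR_one : hermiteR 1 = X := by simp [hermiteR]

lemma hermiteR_succ (n : ℕ) :
    hermiteR (n + 1) = X * hermiteR n - derivative (hermiteR n) := by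
  simp [hermiteR, hermite_succ, Polynomial.derivative_map]

lemma derivative_hermiteR (n : ℕ) :
    derivative (hermiteR n) = C (n : ℝ) * hermiteR (n - 1) := by
  induction n with
  | zero => simp [hermiteR_zero]
  | succ n ih =>
    cases n with
    | zero => simp [hermiteR_one, hermiteR_zero]
    | succ k =>
      rw [hermiteR_succ (k+1)]
      rw [derivative_sub, derivative_mul, derivative_X, one_mul, ih, derivative_mul]
      simp only [derivative_C, zero_mul, zero_add, Nat.add_sub_cancel]
      rw [hermiteR_succ k]
      simp only [Nat.cast_add, Nat.cast_one, C_add, C_1]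
      ring

noncomputable def gw (x : ℝ) : ℝ := Real.exp (-(x ^ 2 / 2))

lemma gw_pos (x : ℝ) : 0 < gw x := Real.exp_pos _

lemma continuous_gw : Continuous gw := by
  unfold gw; continuity

lemma integrable_pow_gw (n : ℕ) : Integrable (fun x : ℝ => x ^ n * gw x) := by
  have h2 : Integrable (fun x : ℝ => Real.exp (-(2⁻¹ : ℝ) * x ^ 2)) :=
    integrable_exp_neg_mul_sq (by norm_num)
  have h4 : Integrable (fun x : ℝ => Real.exp (-(4⁻¹ : ℝ) * x ^ 2)) :=
    integrable_exp_neg_mul_sq (by norm_num)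
  refine Integrable.mono' (h2.add ((h4.const_mul ((4 : ℝ) ^ n * n !)))) ?_ ?_
  · exact ((continuous_pow n).mul continuous_gw).aestronglyMeasurable
  · refine ae_of_all _ fun x => ?_
    have hgw : ‖x ^ n * gw x‖ = |x| ^ n * gw x := by
      rw [norm_mul, Real.norm_eq_abs, Real.norm_eq_abs, abs_pow,
        abs_of_pos (gw_pos x)]
    rw [hgw]
    simp only [Pi.add_apply]
    rcases le_total (|x|) 1 with h1 | h1
    · have : |x| ^ n ≤ 1 := pow_le_one₀ (abs_nonneg x) h1
      have hb : |x| ^ n * gw x ≤ Real.exp (-(2⁻¹ : ℝ) * x ^ 2) := by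
        have : |x| ^ n * gw x ≤ 1 * gw x :=
          mul_le_mul_of_nonneg_right this (gw_pos x).le
        simpa [gw, neg_div, mul_comm, neg_mul, mul_inv_cancel₀, div_eq_inv_mul] using this
      have hpos : 0 ≤ (4 : ℝ) ^ n * ↑n ! * Real.exp (-(4⁻¹ : ℝ) * x ^ 2) := by positivity
      linarith
    · -- |x| ≥ 1
      have key : |x| ^ n ≤ (4 : ℝ) ^ n * n ! * Real.exp (x ^ 2 / 4) := by
        have h0 : |x| ^ n ≤ (x ^ 2) ^ n := by
          calc |x| ^ n ≤ (|x| ^ 2) ^ n := by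
                apply pow_le_pow_left₀ (abs_nonneg x) ?_ n
                nlinarith [abs_nonneg x]
          _ = (x ^ 2) ^ n := by rw [sq_abs]
        have h5 : (x ^ 2 / 4) ^ n / n ! ≤ Real.exp (x ^ 2 / 4) :=
          Real.pow_div_factorial_le_exp _ (by positivity) n
        have h6 : (x ^ 2) ^ n ≤ (4 : ℝ) ^ n * n ! * Real.exp (x ^ 2 / 4) := by
          have hn : (0 : ℝ) < n ! := by positivity
          rw [div_pow, div_div] at h5
          rw [div_le_iff₀ (by positivity)] at h5
          calc (x ^ 2) ^ n ≤ Real.exp (x ^ 2 / 4) * (4 ^ n * ↑n !) := h5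
            _ = (4 : ℝ) ^ n * n ! * Real.exp (x ^ 2 / 4) := by ring
        exact h0.trans h6
      have hb : |x| ^ n * gw x ≤ (4 : ℝ) ^ n * n ! * Real.exp (-(4⁻¹ : ℝ) * x ^ 2) := by
        have := mul_le_mul_of_nonneg_right key (gw_pos x).le
        calc |x| ^ n * gw x ≤ (4 : ℝ) ^ n * n ! * Real.exp (x ^ 2 / 4) * gw x := this
          _ = (4 : ℝ) ^ n * n ! * Real.exp (-(4⁻¹ : ℝ) * x ^ 2) := by
              rw [mul_assoc, gw, ← Real.exp_add]
              ring_nf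
      have hpos : 0 ≤ Real.exp (-(2⁻¹ : ℝ) * x ^ 2) := (Real.exp_pos _).le
      linarith

lemma integrable_poly_gw (P : Polynomial ℝ) :
    Integrable (fun x : ℝ => P.eval x * gw x) := by
  induction P using Polynomial.induction_on' with
  | monomial n c =>
    simpa [eval_monomial, mul_assoc] using (integrable_pow_gw n).const_mul c
  | add p q hp hq =>
    simpa [eval_add, add_mul] using hp.fun_add hq

lemma tendsto_poly_gw_atTop (P : Polynomial ℝ) :
    Tendsto (fun x : ℝ => P.eval x * gw x) atTop (nhds 0) := by
  have h := P.tendsto_div_exp_atTop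
  have habs : Tendsto (fun x : ℝ => |P.eval x / Real.exp x|) atTop (nhds 0) := by
    have := h.abs
    simpa using this
  apply squeeze_zero_norm' ?_ habs
  filter_upwards [eventually_ge_atTop (2 : ℝ)] with x hx
  have hxx : -(x ^ 2 / 2) ≤ -x := by nlinarith
  have : gw x ≤ Real.exp (-x) := Real.exp_le_exp.2 hxx
  calc ‖P.eval x * gw x‖ = |P.eval x| * gw x := by
        rw [norm_mul, Real.norm_eq_abs, Real.norm_eq_abs, abs_of_pos (gw_pos x)]
    _ ≤ |P.eval x| * Real.exp (-x) := mul_le_mul_of_nonneg_left this (abs_nonneg _)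
    _ = |P.eval x / Real.exp x| := by
        rw [abs_div, abs_of_pos (Real.exp_pos x), Real.exp_neg, div_eq_mul_inv]

lemma tendsto_poly_gw_atBot (P : Polynomial ℝ) :
    Tendsto (fun x : ℝ => P.eval x * gw x) atBot (nhds 0) := by
  have h := (tendsto_poly_gw_atTop (P.comp (-X))).comp tendsto_neg_atBot_atTop
  refine h.congr fun x => ?_
  simp only [Function.comp_apply, eval_comp, eval_neg, eval_X, neg_neg, gw, neg_sq]

lemma hasDerivAt_poly_gw (P : Polynomial ℝ) (x : ℝ) :
    HasDerivAt (fun y : ℝ => P.eval y * gw y)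
      (((derivative P : Polynomial ℝ) - X * P).eval x * gw x) x := by
  have h1 : HasDerivAt (fun y : ℝ => P.eval y) ((derivative P).eval x) x :=
    P.hasDerivAt x
  have h2 : HasDerivAt gw (-x * gw x) x := by
    have hinner : HasDerivAt (fun y : ℝ => -(y ^ 2 / 2)) (-x) x := by
      have := ((hasDerivAt_pow 2 x).div_const 2).fun_neg
      simpa using this
    have := hinner.exp
    unfold gw
    simpa [gw, mul_comm] using this
  have := h1.fun_mul h2
  refine this.congr_deriv ?_
  simp only [eval_sub, eval_mul, eval_X]
  ring

lemma integral_ibp_gw (P : Polynomial ℝ) :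
    ∫ x : ℝ, ((X : Polynomial ℝ) * P).eval x * gw x
      = ∫ x : ℝ, (derivative P).eval x * gw x := by
  set Q : Polynomial ℝ := (derivative P : Polynomial ℝ) - X * P with hQ
  have hint : Integrable (fun x : ℝ => Q.eval x * gw x) := integrable_poly_gw Q
  have hzero : ∫ x : ℝ, Q.eval x * gw x = 0 := by
    have hIoi : ∫ x in Set.Ioi (0:ℝ), Q.eval x * gw x = 0 - (P.eval 0 * gw 0) :=
      integral_Ioi_of_hasDerivAt_of_tendsto
        (Continuous.continuousWithinAt (by
          exact (P.continuous_aeval.mul continuous_gw)))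
        (fun x _ => hasDerivAt_poly_gw P x)
        hint.integrableOn (tendsto_poly_gw_atTop P)
    have hIic : ∫ x in Set.Iic (0:ℝ), Q.eval x * gw x = (P.eval 0 * gw 0) - 0 :=
      integral_Iic_of_hasDerivAt_of_tendsto
        (Continuous.continuousWithinAt (by
          exact (P.continuous_aeval.mul continuous_gw)))
        (fun x _ => hasDerivAt_poly_gw P x)
        hint.integrableOn (tendsto_poly_gw_atBot P)
    have := intervalIntegral.integral_Iic_add_Ioi (b := (0:ℝ))
      hint.integrableOn hint.integrableOn
    rw [hIic, hIoi] at this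
    linarith [this.symm]
  have hsub : ∫ x : ℝ, Q.eval x * gw x
      = (∫ x : ℝ, (derivative P).eval x * gw x)
        - ∫ x : ℝ, ((X : Polynomial ℝ) * P).eval x * gw x := by
    rw [hQ]
    simp only [eval_sub, sub_mul]
    exact integral_sub (integrable_poly_gw _) (integrable_poly_gw _)
  rw [hzero] at hsub
  linarith

/-- The density of the standard Gaussian as an `ℝ≥0`-valued function. -/
noncomputable def gdens (x : ℝ) : NNReal := (gaussianPDFReal 0 1 x).toNNReal

lemma measurable_gdens : Measurable gdens :=
  (measurable_gaussianPDFReal 0 1).real_toNNReal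

lemma stdGaussian_eq : _root_.stdGaussian = (volume : Measure ℝ).withDensity (fun x => (gdens x : ENNReal)) := by
  rw [_root_.stdGaussian, gaussianReal_of_var_ne_zero _ one_ne_zero]
  rfl

lemma gdens_smul (x : ℝ) (r : ℝ) : (gdens x : ℝ) * r = (Real.sqrt (2 * π))⁻¹ * (r * gw x) := by
  have h : (gdens x : ℝ) = gaussianPDFReal 0 1 x :=
    Real.coe_toNNReal _ (gaussianPDFReal_nonneg 0 1 x)
  rw [h, gaussianPDFReal]
  simp only [NNReal.coe_one, mul_one, sub_zero, gw]
  rw [show -x ^ 2 / (2:ℝ) = -(x^2/2) by ring]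
  ring

lemma integral_stdGaussian (f : ℝ → ℝ) :
    ∫ x, f x ∂stdGaussian = (Real.sqrt (2 * π))⁻¹ * ∫ x, f x * gw x := by
  rw [stdGaussian_eq, integral_withDensity_eq_integral_smul measurable_gdens]
  simp only [NNReal.smul_def, smul_eq_mul]
  rw [← integral_const_mul]
  congr 1
  ext x
  exact gdens_smul x (f x)

lemma integrable_poly_stdGaussian (P : Polynomial ℝ) :
    Integrable (fun x : ℝ => P.eval x) stdGaussian := by
  rw [stdGaussian_eq, integrable_withDensity_iff_integrable_smul measurable_gdens]
  have : (fun x : ℝ => gdens x • P.eval x)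
      = fun x : ℝ => (Real.sqrt (2 * π))⁻¹ * (P.eval x * gw x) := by
    ext x
    rw [NNReal.smul_def, smul_eq_mul]
    exact gdens_smul x (P.eval x)
  rw [this]
  exact (integrable_poly_gw P).const_mul _

/-- The Gaussian expectation of a polynomial. -/
noncomputable def G (P : Polynomial ℝ) : ℝ := ∫ x, P.eval x ∂stdGaussian

lemma G_one : G 1 = 1 := by
  have : IsProbabilityMeasure stdGaussian := by
    rw [_root_.stdGaussian]; infer_instance
  simp [G]

lemma G_add (P Q : Polynomial ℝ) : G (P + Q) = G P + G Q := by
  unfold G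
  simp only [eval_add]
  exact integral_add (integrable_poly_stdGaussian P) (integrable_poly_stdGaussian Q)

lemma G_sub (P Q : Polynomial ℝ) : G (P - Q) = G P - G Q := by
  unfold G
  simp only [eval_sub]
  exact integral_sub (integrable_poly_stdGaussian P) (integrable_poly_stdGaussian Q)

lemma G_Cmul (c : ℝ) (P : Polynomial ℝ) : G (C c * P) = c * G P := by
  unfold G
  simp only [eval_mul, eval_C]
  exact integral_const_mul c _

lemma G_mul_X (P : Polynomial ℝ) : G ((X : Polynomial ℝ) * P) = G (derivative P) := by
  unfold G
  rw [integral_stdGaussian, integral_stdGaussian, integral_ibp_gw]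

/-- Triple products of Hermite polynomials against the Gaussian. -/
noncomputable def T (a b c : ℕ) : ℝ := G (hermiteR a * hermiteR b * hermiteR c)

lemma T_congr {a b c a' b' c' : ℕ}
    (h : hermiteR a * hermiteR b * hermiteR c = hermiteR a' * hermiteR b' * hermiteR c') :
    T a b c = T a' b' c' := by unfold T; rw [h]

lemma T_rec (a b c : ℕ) :
    T (a + 1) b c = b * T a (b - 1) c + c * T a b (c - 1) := by
  have key : hermiteR (a+1) * hermiteR b * hermiteR c
      = (X : Polynomial ℝ) * (hermiteR a * hermiteR b * hermiteR c)
        - C (a : ℝ) * (hermiteR (a-1) * hermiteR b * hermiteR c) := by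
    rw [hermiteR_succ, derivative_hermiteR]
    ring
  have hD : derivative (hermiteR a * hermiteR b * hermiteR c)
      = C (a : ℝ) * (hermiteR (a-1) * hermiteR b * hermiteR c)
        + (C (b : ℝ) * (hermiteR a * hermiteR (b-1) * hermiteR c)
        + C (c : ℝ) * (hermiteR a * hermiteR b * hermiteR (c-1))) := by
    rw [derivative_mul, derivative_mul, derivative_hermiteR, derivative_hermiteR,
      derivative_hermiteR]
    ring
  unfold T
  rw [key, G_sub, G_Cmul, G_mul_X, hD, G_add, G_add, G_Cmul, G_Cmul, G_Cmul]
  ring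

lemma T_zero_left (b c : ℕ) : T 0 b c = T b 0 c :=
  T_congr (by rw [hermiteR_zero]; ring)

lemma T_zero_zero (c : ℕ) : T c 0 0 = if c = 0 then 1 else 0 := by
  induction c with
  | zero =>
    simp only [if_pos rfl]
    unfold T
    rw [hermiteR_zero]
    simpa using G_one
  | succ n ih =>
    rw [T_rec]
    simp

lemma T_pair (b : ℕ) : ∀ c : ℕ, T b 0 c = if b = c then (b ! : ℝ) else 0 := by
  induction b with
  | zero =>
    intro c
    have h : T 0 0 c = T c 0 0 := T_congr (by rw [hermiteR_zero]; ring)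
    rw [h, T_zero_zero]
    by_cases hc : c = 0 <;> simp [hc, eq_comm]
  | succ n ih =>
    intro c
    rw [T_rec]
    cases c with
    | zero => simp
    | succ k =>
      simp only [Nat.cast_zero, zero_mul, zero_add, Nat.add_sub_cancel, ih k]
      by_cases hk : n = k
      · subst hk
        simp only [if_pos rfl, Nat.factorial_succ]
        push_cast
        ring
      · have : ¬ (n + 1 = k + 1) := by omega
        simp [hk, this]

lemma T_nonneg : ∀ a b c : ℕ, 0 ≤ T a b c := by
  intro a
  induction a with
  | zero =>
    intro b c
    rw [T_zero_left, T_pair]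
    by_cases h : b = c <;> simp [h]
  | succ n ih =>
    intro b c
    rw [T_rec]
    have h1 := ih (b-1) c
    have h2 := ih b (c-1)
    positivity

lemma T_pos : ∀ a b c : ℕ, a ≤ b + c → b ≤ a + c → c ≤ a + b → Even (a + b + c) →
    0 < T a b c := by
  intro a
  induction a with
  | zero =>
    intro b c _ hbc hcb _
    have hbc' : b = c := le_antisymm (by simpa using hbc) (by simpa using hcb)
    subst hbc'
    rw [T_zero_left, T_pair]
    simp only [if_pos rfl]
    exact_mod_cast Nat.factorial_pos _
  | succ n ih =>
    intro b c h1 h2 h3 h4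
    rw [T_rec]
    rw [Nat.even_iff] at h4
    by_cases hcase : 1 ≤ b ∧ c + 1 ≤ n + b
    · have hpos : 0 < T n (b - 1) c := by
        apply ih <;> try omega
        rw [Nat.even_iff]; omega
      have hb0 : (0 : ℝ) < b := by exact_mod_cast hcase.1
      have hnn := T_nonneg n b (c - 1)
      have hc0 : (0 : ℝ) ≤ c := Nat.cast_nonneg c
      nlinarith
    · have hc1 : 1 ≤ c := by omega
      have hpos : 0 < T n b (c - 1) := by
        apply ih <;> try omega
        rw [Nat.even_iff]; omega
      have hc0 : (0 : ℝ) < c := by exact_mod_cast hc1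
      have hnn := T_nonneg n (b - 1) c
      have hb0 : (0 : ℝ) ≤ b := Nat.cast_nonneg b
      nlinarith

lemma integral_cube_eq (m : ℕ) :
    ∫ x, ((hermiteR m).eval x) ^ 3 * x ∂stdGaussian
      = (3 * m : ℝ) * T m m (m - 1) := by
  have h1 : ∫ x, ((hermiteR m).eval x) ^ 3 * x ∂stdGaussian
      = G ((X : Polynomial ℝ) * hermiteR m ^ 3) := by
    unfold G
    congr 1
    ext x
    simp only [eval_mul, eval_pow, eval_X]
    ring
  have h2 : derivative (hermiteR m ^ 3)
      = C ((3 : ℝ) * m) * (hermiteR m * hermiteR m * hermiteR (m - 1)) := by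
    rw [derivative_pow, derivative_hermiteR]
    simp only [Nat.cast_ofNat, C_mul]
    ring
  rw [h1, G_mul_X, h2, G_Cmul]
  rfl



/-- For every odd `m ≥ 1`, the polynomial `He_m(x)³` has Hermite rank `1`; precisely,
`∫ He_m(x)³ x dγ(x) > 0`. -/

theorem hermite_cube_rank_one (m : ℕ) (hm : 1 ≤ m) (hmo : Odd m) :
    HasHermiteRank ((hermiteR m) ^ 3) 1 ∧
    0 < ∫ x, ((hermiteR m).eval x) ^ 3 * x ∂stdGaussian := by
  have hT : 0 < T m m (m - 1) := by
    apply T_pos <;> try omega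
    rw [Nat.even_iff]
    rw [Nat.odd_iff] at hmo
    omega
  have hpos : 0 < ∫ x, ((hermiteR m).eval x) ^ 3 * x ∂stdGaussian := by
    rw [integral_cube_eq]
    have h3m : (0 : ℝ) < 3 * m := by
      have : (1 : ℝ) ≤ m := by exact_mod_cast hm
      linarith
    positivity
  refine ⟨⟨le_refl 1, ?_, fun k hk1 hk2 => absurd (lt_of_le_of_lt hk1 hk2) (lt_irrefl 1)⟩, hpos⟩
  have heq : (∫ x, ((hermiteR m) ^ 3).eval x * (hermiteR 1).eval x ∂stdGaussian)
      = ∫ x, ((hermiteR m).eval x) ^ 3 * x ∂stdGaussian := by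
    congr 1
    ext x
    simp [hermiteR_one]
  rw [heq]
  exact ne_of_gt hpos
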